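/- arXiv:2404.05810 — 5 statements merged into one kernel-verified Lean document; each statement's English description precedes it below -/
import Mathlib

section
/- Let H be a Hermitian operator on a finite-dimensional complex Hilbert space and n a positive natural number. Define SHIFT_n(H) := Σ_{j=0}^{2^n - 1} |j⟩⟨j| ⊗ (H - (2πj/2^n)·I) acting on ℂ^{2^n} ⊗ V. Then exp(i·SHIFT_n(H)) = (⊗_{m=0}^{n-1} Phase(2^m · 2π / 2^n)) ⊗ exp(iH), where Phase(θ) is the 2×2 diagonal matrix diag(1, e^{-iθ}) and the tensor factor at position m acts on the m-th qubit of the n-qubit register storing j in binary. -/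
open Matrix
open scoped Kronecker Real

lemma bitsum : ∀ (n j : ℕ), j < 2 ^ n →
    (∑ m ∈ Finset.range n, (if Nat.testBit j m then 2 ^ m else 0)) = j := by
  intro n
  induction n with
  | zero => intro j hj; interval_cases j; simp
  | succ n ih =>
    intro j hj
    rw [Finset.sum_range_succ']
    have h2 : j / 2 < 2 ^ n := Nat.div_lt_of_lt_mul (by rw [pow_succ] at hj; omega)
    have := ih (j / 2) h2
    simp only [Nat.testBit_succ, pow_succ]
    have hrw : (∑ m ∈ Finset.range n, (if Nat.testBit (j/2) m then 2 ^ m * 2 else 0))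
        = (∑ m ∈ Finset.range n, (if Nat.testBit (j/2) m then 2 ^ m else 0)) * 2 := by
      rw [Finset.sum_mul]; exact Finset.sum_congr rfl fun m _ => by split <;> simp
    rw [hrw, this]
    have hm := Nat.mod_two_eq_zero_or_one j
    have hd := Nat.div_add_mod j 2
    rcases hm with h | h <;> simp [Nat.testBit_zero, h] <;> omega

/-- Kronecker with identity on the right, as a ring hom. -/
def klHom (N d : ℕ) : Matrix (Fin N) (Fin N) ℂ →+* Matrix (Fin N × Fin d) (Fin N × Fin d) ℂ where
  toFun A := A ⊗ₖ (1 : Matrix (Fin d) (Fin d) ℂ)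
  map_one' := Matrix.one_kronecker_one
  map_mul' A B := by rw [← Matrix.mul_kronecker_mul, one_mul]
  map_zero' := Matrix.zero_kronecker 1
  map_add' A B := Matrix.add_kronecker A B 1

/-- Kronecker with identity on the left, as a ring hom. -/
def krHom (N d : ℕ) : Matrix (Fin d) (Fin d) ℂ →+* Matrix (Fin N × Fin d) (Fin N × Fin d) ℂ where
  toFun B := (1 : Matrix (Fin N) (Fin N) ℂ) ⊗ₖ B
  map_one' := Matrix.one_kronecker_one
  map_mul' A B := by rw [← Matrix.mul_kronecker_mul, one_mul]
  map_zero' := Matrix.kronecker_zero 1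
  map_add' A B := Matrix.kronecker_add 1 A B

lemma klHom_continuous (N d : ℕ) : Continuous (klHom N d) := by
  apply continuous_matrix
  rintro ⟨i1, i2⟩ ⟨j1, j2⟩
  simp only [klHom, RingHom.coe_mk, MonoidHom.coe_mk, OneHom.coe_mk, Matrix.kronecker_apply]
  exact (continuous_id.matrix_elem i1 j1).mul continuous_const

lemma exp_kl (N d : ℕ) (A : Matrix (Fin N) (Fin N) ℂ) :
    NormedSpace.exp (A ⊗ₖ (1 : Matrix (Fin d) (Fin d) ℂ))
      = (NormedSpace.exp A) ⊗ₖ (1 : Matrix (Fin d) (Fin d) ℂ) := by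
  letI : SeminormedRing (Matrix (Fin N) (Fin N) ℂ) := Matrix.linftyOpSemiNormedRing
  letI : NormedRing (Matrix (Fin N) (Fin N) ℂ) := Matrix.linftyOpNormedRing
  letI : NormedAlgebra ℂ (Matrix (Fin N) (Fin N) ℂ) := Matrix.linftyOpNormedAlgebra
  letI : SeminormedRing (Matrix (Fin N × Fin d) (Fin N × Fin d) ℂ) := Matrix.linftyOpSemiNormedRing
  letI : NormedRing (Matrix (Fin N × Fin d) (Fin N × Fin d) ℂ) := Matrix.linftyOpNormedRing
  letI : NormedAlgebra ℂ (Matrix (Fin N × Fin d) (Fin N × Fin d) ℂ) := Matrix.linftyOpNormedAlgebra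
  letI : NormedAlgebra ℚ (Matrix (Fin N) (Fin N) ℂ) := NormedAlgebra.restrictScalars ℚ ℂ _
  exact (NormedSpace.map_exp (klHom N d) (klHom_continuous N d) A).symm

lemma krHom_continuous (N d : ℕ) : Continuous (krHom N d) := by
  apply continuous_matrix
  rintro ⟨i1, i2⟩ ⟨j1, j2⟩
  simp only [krHom, RingHom.coe_mk, MonoidHom.coe_mk, OneHom.coe_mk, Matrix.kronecker_apply]
  exact continuous_const.mul (continuous_id.matrix_elem i2 j2)

lemma exp_kr (N d : ℕ) (B : Matrix (Fin d) (Fin d) ℂ) :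
    NormedSpace.exp ((1 : Matrix (Fin N) (Fin N) ℂ) ⊗ₖ B)
      = (1 : Matrix (Fin N) (Fin N) ℂ) ⊗ₖ (NormedSpace.exp B) := by
  letI : SeminormedRing (Matrix (Fin d) (Fin d) ℂ) := Matrix.linftyOpSemiNormedRing
  letI : NormedRing (Matrix (Fin d) (Fin d) ℂ) := Matrix.linftyOpNormedRing
  letI : NormedAlgebra ℂ (Matrix (Fin d) (Fin d) ℂ) := Matrix.linftyOpNormedAlgebra
  letI : SeminormedRing (Matrix (Fin N × Fin d) (Fin N × Fin d) ℂ) := Matrix.linftyOpSemiNormedRing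
  letI : NormedRing (Matrix (Fin N × Fin d) (Fin N × Fin d) ℂ) := Matrix.linftyOpNormedRing
  letI : NormedAlgebra ℂ (Matrix (Fin N × Fin d) (Fin N × Fin d) ℂ) := Matrix.linftyOpNormedAlgebra
  letI : NormedAlgebra ℚ (Matrix (Fin d) (Fin d) ℂ) := NormedAlgebra.restrictScalars ℚ ℂ _
  exact (NormedSpace.map_exp (krHom N d) (krHom_continuous N d) B).symm

lemma entry_eq (n j : ℕ) (hj : j < 2 ^ n) :
    Complex.exp (-(Complex.I * ((2 * π * j / 2 ^ n : ℝ) : ℂ)))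
      = ∏ m ∈ Finset.range n,
          if Nat.testBit j m then
            Complex.exp (-Complex.I * ((2 ^ m * 2 * π / 2 ^ n : ℝ) : ℂ)) else 1 := by
  have h1 : ∀ m ∈ Finset.range n,
      (if Nat.testBit j m then
          Complex.exp (-Complex.I * ((2 ^ m * 2 * π / 2 ^ n : ℝ) : ℂ)) else 1)
        = Complex.exp (if Nat.testBit j m then
            -Complex.I * ((2 ^ m * 2 * π / 2 ^ n : ℝ) : ℂ) else 0) := by
    intro m _; split <;> simp
  rw [Finset.prod_congr rfl h1, ← Complex.exp_sum]
  congr 1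
  have hsum : (∑ m ∈ Finset.range n, (if Nat.testBit j m then ((2 : ℂ) ^ m) else 0)) = (j : ℂ) := by
    have h := bitsum n j hj
    calc (∑ m ∈ Finset.range n, (if Nat.testBit j m then ((2 : ℂ) ^ m) else 0))
        = ((∑ m ∈ Finset.range n, (if Nat.testBit j m then 2 ^ m else 0) : ℕ) : ℂ) := by
          push_cast [apply_ite (Nat.cast : ℕ → ℂ)]; rfl
      _ = (j : ℂ) := by rw [h]
  have h2 : ∀ m ∈ Finset.range n,
      (if Nat.testBit j m then -Complex.I * ((2 ^ m * 2 * π / 2 ^ n : ℝ) : ℂ) else 0)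
        = (if Nat.testBit j m then ((2 : ℂ) ^ m) else 0) * (-Complex.I * 2 * (π : ℂ) / 2 ^ n) := by
    intro m _; split
    · push_cast; ring
    · simp
  rw [Finset.sum_congr rfl h2, ← Finset.sum_mul, hsum]
  push_cast
  ring

/-- `exp(i·SHIFT_n(H)) = (⊗_m Phase(2^m·2π/2^n)) ⊗ exp(iH)`: the shifted Hamiltonian
`SHIFT_n(H) = Σ_j |j⟩⟨j| ⊗ (H − (2πj/2^n)·I)` exponentiates to the tensor product of
single-qubit phase gates (whose `n`-fold tensor product is the diagonal matrix with
entries `∏_{m<n} (bit m of j = 1 ? e^{-i 2^m·2π/2^n} : 1)`) with `exp(iH)`. -/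
theorem stmt2 (n : ℕ) (hn : 0 < n) {d : ℕ} (H : Matrix (Fin d) (Fin d) ℂ)
    (hH : H.IsHermitian) :
    NormedSpace.exp (Complex.I • ∑ j : Fin (2 ^ n),
        (Matrix.single j j (1:ℂ)) ⊗ₖ
          (H - (((2 * π * (j : ℕ) / 2 ^ n : ℝ)) : ℂ) • (1 : Matrix (Fin d) (Fin d) ℂ)))
      = (Matrix.diagonal fun j : Fin (2 ^ n) =>
          ∏ m ∈ Finset.range n,
            if Nat.testBit (j : ℕ) m then
              Complex.exp (-Complex.I * ((2 ^ m * 2 * π / 2 ^ n : ℝ) : ℂ)) else 1)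
        ⊗ₖ NormedSpace.exp (Complex.I • H) := by
  have hdec : (Complex.I • ∑ j : Fin (2 ^ n),
        (Matrix.single j j (1:ℂ)) ⊗ₖ
          (H - (((2 * π * (j : ℕ) / 2 ^ n : ℝ)) : ℂ) • (1 : Matrix (Fin d) (Fin d) ℂ)))
      = (Matrix.diagonal fun j : Fin (2 ^ n) =>
            -(Complex.I * (((2 * π * (j : ℕ) / 2 ^ n : ℝ)) : ℂ)))
          ⊗ₖ (1 : Matrix (Fin d) (Fin d) ℂ)
        + (1 : Matrix (Fin (2 ^ n)) (Fin (2 ^ n)) ℂ) ⊗ₖ (Complex.I • H) := by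
    ext ⟨a, b⟩ ⟨c, e⟩
    simp only [Matrix.smul_apply, Matrix.sum_apply, Matrix.kronecker_apply, Matrix.add_apply,
      Matrix.sub_apply, Matrix.one_apply, Matrix.diagonal_apply, Matrix.single,
      Matrix.of_apply, Finset.smul_sum]
    rw [Finset.sum_eq_single a]
    · by_cases hac : a = c
      · subst hac
        by_cases hbe : b = e <;> simp [hbe, Matrix.smul_apply] <;> ring
      · simp [hac, Ne.symm hac]
    · intro j _ hj
      have h' : ¬(j = a ∧ j = c) := fun h => hj h.1
      simp [h']
    · simp
  rw [hdec]
  have hcomm : Commute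
      ((Matrix.diagonal fun j : Fin (2 ^ n) =>
          -(Complex.I * (((2 * π * (j : ℕ) / 2 ^ n : ℝ)) : ℂ)))
        ⊗ₖ (1 : Matrix (Fin d) (Fin d) ℂ))
      ((1 : Matrix (Fin (2 ^ n)) (Fin (2 ^ n)) ℂ) ⊗ₖ (Complex.I • H)) := by
    unfold Commute SemiconjBy
    rw [← Matrix.mul_kronecker_mul, ← Matrix.mul_kronecker_mul, one_mul, mul_one, one_mul, mul_one]
  rw [Matrix.exp_add_of_commute _ _ hcomm, exp_kl, exp_kr, Matrix.exp_diagonal,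
    ← Matrix.mul_kronecker_mul, mul_one, one_mul]
  have hdg : (NormedSpace.exp fun j : Fin (2 ^ n) =>
        -(Complex.I * (((2 * π * (j : ℕ) / 2 ^ n : ℝ)) : ℂ)))
      = fun j : Fin (2 ^ n) =>
          ∏ m ∈ Finset.range n,
            if Nat.testBit (j : ℕ) m then
              Complex.exp (-Complex.I * ((2 ^ m * 2 * π / 2 ^ n : ℝ) : ℂ)) else 1 := by
    rw [Pi.exp_def]
    funext j
    rw [← Complex.exp_eq_exp_ℂ]
    exact entry_eq n (j : ℕ) j.isLt
  rw [hdg]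
end

section
/- Let A be a Hermitian operator with ‖A‖ ≤ 1, Π an orthogonal projection, δ ∈ (0,1), and H₀ := I - 2Π. For t ≥ 0 define U₁(t) := (√δ/(2i)) ∫₀ᵗ e^{iH₀s} A e^{-iH₀s} ds. Then ‖(I - Π) U₁(t) Π‖ = ‖(I-Π)AΠ‖ · (√δ/2)·|sin t|, and in particular ‖(I - Π) U₁(t) Π‖ ≤ √δ/2 for all t, and ‖(I - Π) U₁(kπ) Π‖ = 0 for every k ∈ ℕ. -/
open NormedSpace
open scoped Real


variable {𝔸 : Type*} [NormedRing 𝔸] [NormedAlgebra ℂ 𝔸] [CompleteSpace 𝔸]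

lemma mul_exp_of_mul_eq (q M : 𝔸) (c : ℂ) (h : q * M = c • q) :
    q * exp M = Complex.exp c • q := by
  have hpow : ∀ k : ℕ, q * M ^ k = c ^ k • q := by
    intro k
    induction k with
    | zero => simp
    | succ k ih =>
      rw [pow_succ, ← mul_assoc, ih, smul_mul_assoc, h, smul_smul, pow_succ]
  have hs : Summable fun k : ℕ => ((k.factorial : ℂ))⁻¹ • M ^ k := expSeries_summable' M
  calc q * exp M = q * ∑' k : ℕ, ((k.factorial : ℂ))⁻¹ • M ^ k := by rw [exp_eq_tsum ℂ]
    _ = ∑' k : ℕ, q * (((k.factorial : ℂ))⁻¹ • M ^ k) := by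
        exact (ContinuousLinearMap.mul ℂ 𝔸 q).map_tsum hs
    _ = ∑' k : ℕ, ((k.factorial : ℂ))⁻¹ • (c ^ k • q) := by
        simp_rw [mul_smul_comm, hpow]
    _ = (∑' k : ℕ, ((k.factorial : ℂ))⁻¹ * c ^ k) • q := by
        simp_rw [smul_smul]
        exact Summable.tsum_smul_const ((expSeries_summable' (𝕂 := ℂ) c).congr
          (fun k => smul_eq_mul ..)) q
    _ = Complex.exp c • q := by
        rw [show (∑' k : ℕ, ((k.factorial : ℂ))⁻¹ * c ^ k) = exp c from by
          rw [exp_eq_tsum ℂ]; simp_rw [smul_eq_mul], ← Complex.exp_eq_exp_ℂ]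

lemma exp_mul_of_mul_eq (q M : 𝔸) (c : ℂ) (h : M * q = c • q) :
    exp M * q = Complex.exp c • q := by
  have hpow : ∀ k : ℕ, M ^ k * q = c ^ k • q := by
    intro k
    induction k with
    | zero => simp
    | succ k ih =>
      rw [pow_succ', mul_assoc, ih, mul_smul_comm, h, smul_smul, pow_succ, mul_comm]
  have hs : Summable fun k : ℕ => ((k.factorial : ℂ))⁻¹ • M ^ k := expSeries_summable' M
  calc exp M * q = (∑' k : ℕ, ((k.factorial : ℂ))⁻¹ • M ^ k) * q := by rw [exp_eq_tsum ℂ]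
    _ = ∑' k : ℕ, (((k.factorial : ℂ))⁻¹ • M ^ k) * q := by
        exact ((ContinuousLinearMap.mul ℂ 𝔸).flip q).map_tsum hs
    _ = ∑' k : ℕ, ((k.factorial : ℂ))⁻¹ • (c ^ k • q) := by
        simp_rw [smul_mul_assoc, hpow]
    _ = (∑' k : ℕ, ((k.factorial : ℂ))⁻¹ * c ^ k) • q := by
        simp_rw [smul_smul]
        exact Summable.tsum_smul_const ((expSeries_summable' (𝕂 := ℂ) c).congr
          (fun k => smul_eq_mul ..)) q
    _ = Complex.exp c • q := by
        rw [show (∑' k : ℕ, ((k.factorial : ℂ))⁻¹ * c ^ k) = exp c from by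
          rw [exp_eq_tsum ℂ]; simp_rw [smul_eq_mul], ← Complex.exp_eq_exp_ℂ]

set_option maxHeartbeats 1000000 in
/-- First-order Dyson term leakage: with `H₀ = 1 - 2p` and
`U₁(t) = (√δ/(2i)) ∫₀ᵗ e^{iH₀s} A e^{-iH₀s} ds`, the off-diagonal block satisfies
`‖(1-p) U₁(t) p‖ = ‖(1-p)Ap‖ (√δ/2)|sin t|`, is at most `√δ/2`, and vanishes at `t = kπ`. -/
theorem stmt4 {n : ℕ} (A p H₀ : EuclideanSpace ℂ (Fin n) →L[ℂ] EuclideanSpace ℂ (Fin n))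
    (hA : IsSelfAdjoint A) (hA1 : ‖A‖ ≤ 1)
    (hidem : IsIdempotentElem p) (hpsa : IsSelfAdjoint p)
    (δ : ℝ) (hδ : δ ∈ Set.Ioo (0:ℝ) 1)
    (hH₀ : H₀ = 1 - (2:ℂ) • p)
    (U₁ : ℝ → EuclideanSpace ℂ (Fin n) →L[ℂ] EuclideanSpace ℂ (Fin n))
    (hU₁ : ∀ t : ℝ, U₁ t = ((Real.sqrt δ : ℂ) / (2 * Complex.I)) •
      ∫ s in (0:ℝ)..t, exp ((Complex.I * s) • H₀) ∘L A ∘L exp ((-Complex.I * s) • H₀)) :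
    (∀ t : ℝ, 0 ≤ t →
      ‖(1 - p) ∘L U₁ t ∘L p‖ = ‖(1 - p) ∘L A ∘L p‖ * (Real.sqrt δ / 2) * |Real.sin t|) ∧
    (∀ t : ℝ, 0 ≤ t → ‖(1 - p) ∘L U₁ t ∘L p‖ ≤ Real.sqrt δ / 2) ∧
    (∀ k : ℕ, ‖(1 - p) ∘L U₁ (k * π) ∘L p‖ = 0) := by
  obtain ⟨hδ0, hδ1⟩ := hδ
  set B : EuclideanSpace ℂ (Fin n) →L[ℂ] EuclideanSpace ℂ (Fin n) := (1 - p) ∘L A ∘L p with hBdef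
  have hq : (1 - p) * H₀ = (1 - p) := by
    rw [hH₀]
    simp only [mul_sub, sub_mul, mul_one, one_mul, mul_smul_comm, hidem.eq]
    module
  have hp : H₀ * p = -p := by
    rw [hH₀]
    simp only [sub_mul, one_mul, smul_mul_assoc, hidem.eq]
    module
  -- pointwise identity for the integrand
  have hL : ∀ s : ℝ,
      (1 - p) ∘L (exp ((Complex.I * s) • H₀) ∘L A ∘L exp ((-Complex.I * s) • H₀)) ∘L p
        = Complex.exp (2 * Complex.I * s) • B := by
    intro s
    have h1 : (1 - p) * exp ((Complex.I * s) • H₀) = Complex.exp (Complex.I * s) • (1 - p) :=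
      mul_exp_of_mul_eq _ _ _ (by rw [mul_smul_comm, hq])
    have h2 : exp ((-Complex.I * s) • H₀) * p = Complex.exp (Complex.I * s) • p :=
      exp_mul_of_mul_eq _ _ _
        (by rw [smul_mul_assoc, hp, smul_neg, ← neg_smul, neg_mul, neg_neg])
    show (1 - p) * (exp ((Complex.I * s) • H₀) * (A * exp ((-Complex.I * s) • H₀)) * p)
        = Complex.exp (2 * Complex.I * s) • ((1 - p) * (A * p))
    calc (1 - p) * (exp ((Complex.I * s) • H₀) * (A * exp ((-Complex.I * s) • H₀)) * p)
        = ((1 - p) * exp ((Complex.I * s) • H₀)) * (A * (exp ((-Complex.I * s) • H₀) * p)) := by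
          simp only [mul_assoc]
      _ = (Complex.exp (Complex.I * s) * Complex.exp (Complex.I * s)) • ((1 - p) * (A * p)) := by
          rw [h1, h2]
          simp only [mul_smul_comm, smul_mul_assoc, smul_smul]
      _ = Complex.exp (2 * Complex.I * s) • ((1 - p) * (A * p)) := by
          rw [← Complex.exp_add]; ring_nf
  have key : ∀ t : ℝ, (1 - p) ∘L U₁ t ∘L p
      = (((Real.sqrt δ : ℂ) / (2 * Complex.I)) *
          ((Complex.exp (2 * Complex.I * t) - 1) / (2 * Complex.I))) • B := by
    intro t
    have hcont : Continuous fun s : ℝ =>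
        exp ((Complex.I * s) • H₀) ∘L A ∘L exp ((-Complex.I * s) • H₀) := by
      apply Continuous.clm_comp
      · exact (continuous_iff_continuousAt.2 fun x => (exp_analytic (𝕂 := ℂ) x).continuousAt).comp (by fun_prop)
      · exact (continuous_const (y := A)).clm_comp ((continuous_iff_continuousAt.2 fun x => (exp_analytic (𝕂 := ℂ) x).continuousAt).comp (by fun_prop))
    have hint : IntervalIntegrable
        (fun s : ℝ => exp ((Complex.I * s) • H₀) ∘L A ∘L exp ((-Complex.I * s) • H₀))
        MeasureTheory.volume 0 t := hcont.intervalIntegrable 0 t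
    set L : (EuclideanSpace ℂ (Fin n) →L[ℂ] EuclideanSpace ℂ (Fin n)) →L[ℂ] (EuclideanSpace ℂ (Fin n) →L[ℂ] EuclideanSpace ℂ (Fin n)) :=
      (ContinuousLinearMap.compL ℂ (EuclideanSpace ℂ (Fin n)) (EuclideanSpace ℂ (Fin n)) (EuclideanSpace ℂ (Fin n)) (1 - p)).comp
        ((ContinuousLinearMap.compL ℂ (EuclideanSpace ℂ (Fin n)) (EuclideanSpace ℂ (Fin n)) (EuclideanSpace ℂ (Fin n))).flip p) with hLdef
    have hLapp : ∀ X : EuclideanSpace ℂ (Fin n) →L[ℂ] EuclideanSpace ℂ (Fin n), L X = (1 - p) ∘L X ∘L p := by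
      intro X
      simp only [hLdef, ContinuousLinearMap.coe_comp', Function.comp_apply,
        ContinuousLinearMap.flip_apply, ContinuousLinearMap.compL_apply]
    rw [hU₁]
    rw [ContinuousLinearMap.smul_comp, ContinuousLinearMap.comp_smul]
    rw [← hLapp, ← L.intervalIntegral_comp_comm hint]
    simp only [hLapp, hL]
    rw [intervalIntegral.integral_smul_const,
      integral_exp_mul_complex (by simp [Complex.I_ne_zero] : (2 * Complex.I) ≠ 0)]
    simp only [Complex.ofReal_zero, mul_zero, Complex.exp_zero, smul_smul]
  have habs : ∀ t : ℝ, ‖((Real.sqrt δ : ℂ) / (2 * Complex.I)) *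
      ((Complex.exp (2 * Complex.I * t) - 1) / (2 * Complex.I))‖
        = (Real.sqrt δ / 2) * |Real.sin t| := by
    intro t
    have e2 : Complex.exp (2 * Complex.I * t)
        = Complex.exp (Complex.I * t) * Complex.exp ((t : ℂ) * Complex.I) := by
      rw [← Complex.exp_add]; ring_nf
    have e0 : Complex.exp (Complex.I * t) * Complex.exp (-(t : ℂ) * Complex.I) = 1 := by
      rw [← Complex.exp_add, show Complex.I * (t:ℂ) + -(t:ℂ) * Complex.I = 0 by ring,
        Complex.exp_zero]
    have h1 : Complex.exp (2 * Complex.I * t) - 1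
        = Complex.exp (Complex.I * t) * (2 * Complex.I * Complex.sin t) := by
      rw [Complex.sin]
      linear_combination e2 + e0 + (Complex.exp (Complex.I * t) *
        (Complex.exp ((t:ℂ) * Complex.I) - Complex.exp (-(t:ℂ) * Complex.I))) * Complex.I_sq
    rw [h1, norm_mul, norm_div, norm_div, norm_mul, norm_mul, norm_mul]
    rw [← Complex.ofReal_sin, Complex.norm_real, Complex.norm_real, Real.norm_eq_abs, Real.norm_eq_abs,
      Complex.norm_two, Complex.norm_I, Complex.norm_exp]
    rw [abs_of_nonneg (Real.sqrt_nonneg δ)]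
    simp [Complex.mul_re]
    try ring
  have main : ∀ t : ℝ, ‖(1 - p) ∘L U₁ t ∘L p‖ = ‖B‖ * (Real.sqrt δ / 2) * |Real.sin t| := by
    intro t
    rw [key t]
    rw [norm_smul (↑(Real.sqrt δ) / (2 * Complex.I) *
      ((Complex.exp (2 * Complex.I * ↑t) - 1) / (2 * Complex.I))) B]
    rw [habs t]
    ring
  have hproj : ∀ q : EuclideanSpace ℂ (Fin n) →L[ℂ] EuclideanSpace ℂ (Fin n), IsIdempotentElem q → IsSelfAdjoint q → ‖q‖ ≤ 1 := by
    intro q hqi hqsa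
    have h2 : ‖q‖ * ‖q‖ = ‖q‖ := by
      calc ‖q‖ * ‖q‖ = ‖star q * q‖ := (CStarRing.norm_star_mul_self).symm
        _ = ‖q‖ := by rw [hqsa.star_eq, hqi.eq]
    nlinarith [norm_nonneg q]
  have hB1 : ‖B‖ ≤ 1 := by
    have h1p : ‖(1:EuclideanSpace ℂ (Fin n) →L[ℂ] EuclideanSpace ℂ (Fin n)) - p‖ ≤ 1 :=
      hproj _ hidem.one_sub (by show star _ = _; exact (star_sub 1 p).trans (by rw [star_one, hpsa.star_eq]))
    have hpn : ‖p‖ ≤ 1 := hproj _ hidem hpsa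
    calc ‖B‖ ≤ ‖(1:EuclideanSpace ℂ (Fin n) →L[ℂ] EuclideanSpace ℂ (Fin n)) - p‖ * ‖A ∘L p‖ := ContinuousLinearMap.opNorm_comp_le _ _
      _ ≤ ‖(1:EuclideanSpace ℂ (Fin n) →L[ℂ] EuclideanSpace ℂ (Fin n)) - p‖ * (‖A‖ * ‖p‖) := by
          gcongr
          exact ContinuousLinearMap.opNorm_comp_le _ _
      _ ≤ 1 * (1 * 1) := by gcongr
      _ = 1 := by ring
  refine ⟨fun t _ => main t, ?_, ?_⟩
  · intro t _
    rw [main t]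
    have hs : |Real.sin t| ≤ 1 := Real.abs_sin_le_one t  -- check name
    calc ‖B‖ * (Real.sqrt δ / 2) * |Real.sin t| ≤ 1 * (Real.sqrt δ / 2) * 1 := by
          gcongr
      _ = Real.sqrt δ / 2 := by ring
  · intro k
    rw [main (k * π), Real.sin_nat_mul_pi, abs_zero, mul_zero]
end

section
/- Let H₀ be Hermitian with ‖H₀‖ ≤ 1, A bounded with ‖A‖ ≤ 1, δ ∈ (0,1), and define Dyson terms U₀(t) = I, U_k(t) = (√δ/(2i)) ∫₀ᵗ e^{iH₀s} A e^{-iH₀s} U_{k-1}(s) ds. Suppose ‖U_k(t)‖ ≤ t^k δ^{k/2}/(k! 2^k) for all k. Then for all k ≥ 1 and t ≥ 0, ‖∫₀ᵗ e^{2is} U_k(s) ds‖ ≤ t^k δ^{k/2} / (k! · 2). -/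
set_option maxHeartbeats 1000000
set_option synthInstance.maxHeartbeats 400000


open NormedSpace

lemma exp_skew_norm_le {n : ℕ} (H₀ : EuclideanSpace ℂ (Fin n) →L[ℂ] EuclideanSpace ℂ (Fin n))
    (hH₀ : IsSelfAdjoint H₀) (z : ℂ) (hz : star z = -z) :
    ‖exp (z • H₀)‖ ≤ 1 := by
  set x := exp (z • H₀) with hx
  have hstar : star (z • H₀) = -(z • H₀) := by
    rw [star_smul, hH₀.star_eq, hz]
    exact neg_smul z H₀
  have h1 : star x * x = 1 := by
    let +nondep : NormedAlgebra ℚ (EuclideanSpace ℂ (Fin n) →L[ℂ] EuclideanSpace ℂ (Fin n)) :=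
      .restrictScalars ℚ ℂ _
    rw [hx, star_exp, hstar,
      ← exp_add_of_commute (Commute.neg_left (Commute.refl (z • H₀))), neg_add_cancel, exp_zero]
  have h1' : ContinuousLinearMap.adjoint x ∘L x = 1 := by
    rw [← ContinuousLinearMap.star_eq_adjoint]
    exact h1
  have h2 : ‖ContinuousLinearMap.adjoint x ∘L x‖ = ‖x‖ * ‖x‖ :=
    ContinuousLinearMap.norm_adjoint_comp_self x
  rw [h1'] at h2
  have h3 : ‖(1 : EuclideanSpace ℂ (Fin n) →L[ℂ] EuclideanSpace ℂ (Fin n))‖ ≤ 1 :=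
    ContinuousLinearMap.norm_id_le
  nlinarith [norm_nonneg x]

/-- Integration-by-parts bound: `‖∫₀ᵗ e^{2is} U_k(s) ds‖ ≤ t^k δ^{k/2}/(k!·2)` for `k ≥ 1`. -/
theorem stmt7 {n : ℕ} (A H₀ : EuclideanSpace ℂ (Fin n) →L[ℂ] EuclideanSpace ℂ (Fin n))
    (hA1 : ‖A‖ ≤ 1) (hH₀ : IsSelfAdjoint H₀) (hH₀1 : ‖H₀‖ ≤ 1)
    (δ : ℝ) (hδ : δ ∈ Set.Ioo (0:ℝ) 1)
    (U : ℕ → ℝ → EuclideanSpace ℂ (Fin n) →L[ℂ] EuclideanSpace ℂ (Fin n))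
    (hU0 : ∀ t : ℝ, U 0 t = 1)
    (hU : ∀ (k : ℕ) (t : ℝ), U (k + 1) t = ((Real.sqrt δ : ℂ) / (2 * Complex.I)) •
      ∫ s in (0:ℝ)..t,
        exp ((Complex.I * s) • H₀) ∘L A ∘L exp ((-Complex.I * s) • H₀) ∘L U k s)
    (hbound : ∀ (k : ℕ) (t : ℝ), 0 ≤ t →
      ‖U k t‖ ≤ t ^ k * Real.sqrt δ ^ k / ((Nat.factorial k : ℝ) * 2 ^ k)) :
    ∀ (k : ℕ), 1 ≤ k → ∀ (t : ℝ), 0 ≤ t →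
      ‖∫ s in (0:ℝ)..t, Complex.exp (2 * Complex.I * s) • U k s‖
        ≤ t ^ k * Real.sqrt δ ^ k / ((Nat.factorial k : ℝ) * 2) := by
  obtain ⟨hδ0, hδ1⟩ := hδ
  have hsδ : 0 ≤ Real.sqrt δ := Real.sqrt_nonneg δ
  set c : ℂ := (Real.sqrt δ : ℂ) / (2 * Complex.I) with hc
  set F : ℕ → ℝ → EuclideanSpace ℂ (Fin n) →L[ℂ] EuclideanSpace ℂ (Fin n) := fun k s =>
    exp ((Complex.I * s) • H₀) ∘L A ∘L exp ((-Complex.I * s) • H₀) ∘L U k s with hF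
  -- norm bounds for the unitary exponentials
  have hexp1 : ∀ s : ℝ, ‖exp ((Complex.I * (s:ℂ)) • H₀)‖ ≤ 1 := by
    intro s
    refine exp_skew_norm_le H₀ hH₀ _ ?_
    simp [Complex.star_def, map_mul]
  have hexp2 : ∀ s : ℝ, ‖exp ((-Complex.I * (s:ℂ)) • H₀)‖ ≤ 1 := by
    intro s
    refine exp_skew_norm_le H₀ hH₀ _ ?_
    simp [Complex.star_def, map_mul]
  have hcabs : ‖c‖ = Real.sqrt δ / 2 := by
    rw [hc, norm_div, norm_mul, Complex.norm_I, Complex.norm_real, Real.norm_eq_abs,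
      abs_of_nonneg hsδ]
    norm_num
  have hFnorm : ∀ (k : ℕ) (s : ℝ), ‖F k s‖ ≤ ‖U k s‖ := by
    intro k s
    have h1 := hexp1 s
    have h2 := hexp2 s
    have t1 : ‖F k s‖ ≤ ‖exp ((Complex.I * (s:ℂ)) • H₀)‖ *
        ‖A ∘L exp ((-Complex.I * (s:ℂ)) • H₀) ∘L U k s‖ :=
      ContinuousLinearMap.opNorm_comp_le _ _
    have t2 : ‖A ∘L exp ((-Complex.I * (s:ℂ)) • H₀) ∘L U k s‖ ≤
        ‖A‖ * ‖exp ((-Complex.I * (s:ℂ)) • H₀) ∘L U k s‖ :=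
      ContinuousLinearMap.opNorm_comp_le _ _
    have t3 : ‖exp ((-Complex.I * (s:ℂ)) • H₀) ∘L U k s‖ ≤
        ‖exp ((-Complex.I * (s:ℂ)) • H₀)‖ * ‖U k s‖ :=
      ContinuousLinearMap.opNorm_comp_le _ _
    nlinarith [norm_nonneg (U k s), norm_nonneg A, norm_nonneg (F k s),
      norm_nonneg (exp ((Complex.I * (s:ℂ)) • H₀)),
      norm_nonneg (exp ((-Complex.I * (s:ℂ)) • H₀)),
      norm_nonneg (A ∘L exp ((-Complex.I * (s:ℂ)) • H₀) ∘L U k s),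
      norm_nonneg (exp ((-Complex.I * (s:ℂ)) • H₀) ∘L U k s)]
  -- continuity of the exponential factors
  have hexpc1 : Continuous fun s : ℝ => exp ((Complex.I * (s:ℂ)) • H₀) := by
    let +nondep : NormedAlgebra ℚ (EuclideanSpace ℂ (Fin n) →L[ℂ] EuclideanSpace ℂ (Fin n)) :=
      .restrictScalars ℚ ℂ _
    exact exp_continuous.comp (((continuous_const.mul Complex.continuous_ofReal).smul
      continuous_const))
  have hexpc2 : Continuous fun s : ℝ => exp ((-Complex.I * (s:ℂ)) • H₀) := by
    let +nondep : NormedAlgebra ℚ (EuclideanSpace ℂ (Fin n) →L[ℂ] EuclideanSpace ℂ (Fin n)) :=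
      .restrictScalars ℚ ℂ _
    exact exp_continuous.comp (((continuous_const.mul Complex.continuous_ofReal).smul
      continuous_const))
  -- continuity of U k
  have hUc : ∀ k, Continuous (U k) := by
    intro k
    induction k with
    | zero =>
      have : U 0 = fun _ => 1 := funext hU0
      rw [this]; exact continuous_const
    | succ k ih =>
      have hFc : Continuous (F k) := hexpc1.clm_comp (continuous_const.clm_comp
        (hexpc2.clm_comp ih))
      have : U (k+1) = fun t => c • ∫ s in (0:ℝ)..t, F k s := funext (hU k)
      rw [this]
      exact (intervalIntegral.continuous_primitive
        (fun a b => hFc.intervalIntegrable a b) 0).const_smul c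
  have hFc : ∀ k, Continuous (F k) := fun k =>
    hexpc1.clm_comp (continuous_const.clm_comp (hexpc2.clm_comp (hUc k)))
  -- derivative of U (k+1)
  have hUderiv : ∀ (k : ℕ) (s : ℝ), HasDerivAt (U (k+1)) (c • F k s) s := by
    intro k s
    have h := intervalIntegral.integral_hasDerivAt_right
      ((hFc k).intervalIntegrable 0 s)
      ((hFc k).stronglyMeasurableAtFilter _ _)
      (hFc k).continuousAt
    have heq : U (k+1) = fun t => c • ∫ s in (0:ℝ)..t, F k s := funext (hU k)
    rw [heq]
    exact h.const_smul c
  -- derivative of u s = exp(2is)/(2i)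
  have huderiv : ∀ s : ℝ,
      HasDerivAt (fun s : ℝ => Complex.exp (2*Complex.I*s)/(2*Complex.I))
        (Complex.exp (2*Complex.I*s)) s := by
    intro s
    have h2 : HasDerivAt (fun z : ℂ => 2*Complex.I*z) (2*Complex.I) (s:ℂ) := by
      simpa using (hasDerivAt_id (s:ℂ)).const_mul (2*Complex.I)
    have h3 := (h2.cexp).div_const (2*Complex.I)
    have h4 : Complex.exp (2*Complex.I*s) * (2*Complex.I) / (2*Complex.I)
        = Complex.exp (2*Complex.I*s) := by
      field_simp
    rw [h4] at h3
    exact h3.comp_ofReal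
  intro k hk t ht
  obtain ⟨m, rfl⟩ : ∃ m, k = m + 1 := ⟨k - 1, by omega⟩
  set u : ℝ → ℂ := fun s => Complex.exp (2*Complex.I*s)/(2*Complex.I) with hu
  have hv' : ∀ s, HasDerivAt (U (m+1)) (c • F m s) s := hUderiv m
  have hP : ∀ s : ℝ, HasDerivAt (fun s => u s • U (m+1) s)
      (Complex.exp (2*Complex.I*s) • U (m+1) s + u s • (c • F m s)) s := by
    intro s
    have h := (huderiv s).smul (hv' s)
    rwa [add_comm (u s • c • F m s)] at h
  have hcont2i : Continuous fun s : ℝ => 2*Complex.I*(s:ℂ) :=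
    continuous_const.mul Complex.continuous_ofReal
  have hint1 : Continuous fun s : ℝ => Complex.exp (2*Complex.I*s) • U (m+1) s :=
    (Complex.continuous_exp.comp hcont2i).smul (hUc (m+1))
  have hu_cont : Continuous u := (Complex.continuous_exp.comp hcont2i).div_const _
  have hint2 : Continuous fun s : ℝ => u s • (c • F m s) :=
    hu_cont.smul ((hFc m).const_smul c)
  have heq : (∫ s in (0:ℝ)..t,
      (Complex.exp (2*Complex.I*s) • U (m+1) s + u s • (c • F m s)))
      = u t • U (m+1) t - u 0 • U (m+1) 0 :=
    intervalIntegral.integral_eq_sub_of_hasDerivAt (fun s _ => hP s)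
      ((hint1.add hint2).intervalIntegrable _ _)
  have hsplit : (∫ s in (0:ℝ)..t,
      (Complex.exp (2*Complex.I*s) • U (m+1) s + u s • (c • F m s)))
      = (∫ s in (0:ℝ)..t, Complex.exp (2*Complex.I*s) • U (m+1) s)
        + ∫ s in (0:ℝ)..t, u s • (c • F m s) :=
    intervalIntegral.integral_add (hint1.intervalIntegrable 0 t)
      (hint2.intervalIntegrable 0 t)
  have hv0 : U (m+1) 0 = 0 := by
    rw [hU m 0, intervalIntegral.integral_same]
    ext x; simp
  have hz0 : u 0 • U (m+1) 0 = 0 := by rw [hv0]; ext x; simp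
  rw [hsplit, hz0, sub_zero] at heq
  have hmain : (∫ s in (0:ℝ)..t, Complex.exp (2*Complex.I*s) • U (m+1) s)
      = u t • U (m+1) t - ∫ s in (0:ℝ)..t, u s • (c • F m s) :=
    eq_sub_of_add_eq heq
  -- norm of u
  have habs_u : ∀ s : ℝ, ‖u s‖ = 1/2 := by
    intro s
    have h1 : Complex.exp (2*Complex.I*(s:ℂ)) = Complex.exp (((2*s:ℝ):ℂ)*Complex.I) := by
      push_cast; ring_nf
    rw [hu]
    simp only [norm_div, h1, norm_mul, Complex.norm_I,
      Complex.norm_exp_ofReal_mul_I]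
    norm_num
  -- arithmetic abbreviations
  have hfm : (0:ℝ) < (Nat.factorial m : ℝ) := by
    exact_mod_cast Nat.factorial_pos m
  have hm1 : (0:ℝ) < (m:ℝ) + 1 := by positivity
  -- pointwise bound on second integrand
  have hptw : ∀ s ∈ Set.Icc (0:ℝ) t, ‖u s • (c • F m s)‖
      ≤ Real.sqrt δ ^ (m+1) / (4 * (Nat.factorial m : ℝ) * 2^m) * s^m := by
    intro s hs
    have h1 : ‖F m s‖ ≤ s^m * Real.sqrt δ ^ m / ((Nat.factorial m : ℝ) * 2^m) :=
      (hFnorm m s).trans (hbound m s hs.1)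
    calc ‖u s • (c • F m s)‖ ≤ ‖u s‖ * ‖c • F m s‖ := ContinuousLinearMap.opNorm_smul_le _ _
      _ ≤ ‖u s‖ * (‖c‖ * ‖F m s‖) :=
          mul_le_mul_of_nonneg_left (ContinuousLinearMap.opNorm_smul_le _ _) (norm_nonneg _)
      _ = 1/2 * (Real.sqrt δ / 2 * ‖F m s‖) := by rw [habs_u s, hcabs]
      _ = Real.sqrt δ / 4 * ‖F m s‖ := by ring
      _ ≤ Real.sqrt δ / 4 * (s^m * Real.sqrt δ ^ m / ((Nat.factorial m : ℝ) * 2^m)) := by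
          apply mul_le_mul_of_nonneg_left h1 (by positivity)
      _ = Real.sqrt δ ^ (m+1) / (4 * (Nat.factorial m : ℝ) * 2^m) * s^m := by
          rw [pow_succ]; ring
  have hIb : ‖∫ s in (0:ℝ)..t, u s • (c • F m s)‖
      ≤ Real.sqrt δ ^ (m+1) / (4 * (Nat.factorial m : ℝ) * 2^m) * (t^(m+1)/((m:ℝ)+1)) := by
    calc ‖∫ s in (0:ℝ)..t, u s • (c • F m s)‖
        ≤ ∫ s in (0:ℝ)..t, ‖u s • (c • F m s)‖ :=
          intervalIntegral.norm_integral_le_integral_norm ht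
      _ ≤ ∫ s in (0:ℝ)..t,
            Real.sqrt δ ^ (m+1) / (4 * (Nat.factorial m : ℝ) * 2^m) * s^m :=
          intervalIntegral.integral_mono_on ht (hint2.norm.intervalIntegrable 0 t)
            ((continuous_const.mul (continuous_pow m)).intervalIntegrable 0 t) hptw
      _ = Real.sqrt δ ^ (m+1) / (4 * (Nat.factorial m : ℝ) * 2^m) * (t^(m+1)/((m:ℝ)+1)) := by
          rw [intervalIntegral.integral_const_mul, integral_pow]
          norm_num
  have hPt : ‖u t • U (m+1) t‖
      ≤ 1/2 * (t^(m+1) * Real.sqrt δ ^ (m+1) / ((Nat.factorial (m+1) : ℝ) * 2^(m+1))) := by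
    calc ‖u t • U (m+1) t‖ ≤ ‖u t‖ * ‖U (m+1) t‖ := ContinuousLinearMap.opNorm_smul_le _ _
      _ = 1/2 * ‖U (m+1) t‖ := by rw [habs_u t]
      _ ≤ 1/2 * (t^(m+1) * Real.sqrt δ ^ (m+1) / ((Nat.factorial (m+1) : ℝ) * 2^(m+1))) :=
          mul_le_mul_of_nonneg_left (hbound (m+1) t ht) (by norm_num)
  calc ‖∫ s in (0:ℝ)..t, Complex.exp (2*Complex.I*s) • U (m+1) s‖
      = ‖u t • U (m+1) t - ∫ s in (0:ℝ)..t, u s • (c • F m s)‖ := by rw [hmain]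
    _ ≤ ‖u t • U (m+1) t‖ + ‖∫ s in (0:ℝ)..t, u s • (c • F m s)‖ := norm_sub_le _ _
    _ ≤ 1/2 * (t^(m+1) * Real.sqrt δ ^ (m+1) / ((Nat.factorial (m+1) : ℝ) * 2^(m+1)))
        + Real.sqrt δ ^ (m+1) / (4 * (Nat.factorial m : ℝ) * 2^m) * (t^(m+1)/((m:ℝ)+1)) :=
        add_le_add hPt hIb
    _ = t^(m+1) * Real.sqrt δ ^ (m+1) / (((m:ℝ)+1) * (Nat.factorial m : ℝ) * 2^(m+1)) := by
        rw [Nat.factorial_succ]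
        push_cast
        field_simp
        ring
    _ ≤ t^(m+1) * Real.sqrt δ ^ (m+1) / ((Nat.factorial (m+1) : ℝ) * 2) := by
        rw [Nat.factorial_succ]
        push_cast
        have h2 : (2:ℝ) ≤ 2^(m+1) := by
          calc (2:ℝ) = 2^1 := by norm_num
            _ ≤ 2^(m+1) := by
              apply pow_le_pow_right₀ (by norm_num) (by omega)
        gcongr
end

section
/- For all t ≥ 0 and all natural numbers m ≥ 0, |∫₀ᵗ e^{2is} · s^m / m! ds| ≤ t^m / m!. -/
open Complex intervalIntegral

noncomputable def Fi (t : ℝ) (m : ℕ) : ℂ :=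
  ∫ s in (0:ℝ)..t, Complex.exp (2 * Complex.I * s) * (s:ℂ) ^ m / (Nat.factorial m : ℂ)

lemma Fi_trivial (t : ℝ) (ht : 0 ≤ t) (m : ℕ) :
    ‖Fi t m‖ ≤ t ^ (m+1) / (Nat.factorial (m+1) : ℝ) := by
  have h : ‖Fi t m‖ ≤ |∫ s in (0:ℝ)..t, s ^ m / (Nat.factorial m : ℝ)| := by
    apply intervalIntegral.norm_integral_le_abs_of_norm_le
    · filter_upwards [MeasureTheory.ae_restrict_mem measurableSet_uIoc] with s hs
      rw [Set.uIoc_of_le ht] at hs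
      have hs0 : 0 ≤ s := le_of_lt hs.1
      rw [norm_div, norm_mul, Complex.norm_exp]
      simp [Complex.norm_natCast, _root_.abs_of_nonneg hs0, mul_comm]
    · apply Continuous.intervalIntegrable; fun_prop
  calc ‖Fi t m‖ ≤ _ := h
    _ ≤ t ^ (m+1) / (Nat.factorial (m+1) : ℝ) := by
        rw [integral_div, integral_pow, zero_pow (Nat.succ_ne_zero m), sub_zero,
          _root_.abs_of_nonneg (by positivity), Nat.factorial_succ]
        push_cast
        rw [div_div]


lemma Fi_ibp (t : ℝ) (m : ℕ) :
    Fi t (m+1) = (t:ℂ) ^ (m+1) / (Nat.factorial (m+1) : ℂ) * (Complex.exp (2*Complex.I*t) / (2*Complex.I))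
      - (1 / (2*Complex.I)) * Fi t m := by
  have h2I : (2 * Complex.I : ℂ) ≠ 0 := by simp [Complex.I_ne_zero]
  have key := intervalIntegral.integral_mul_deriv_eq_deriv_mul
    (u := fun s : ℝ => (s:ℂ)^(m+1) / (Nat.factorial (m+1) : ℂ))
    (v := fun s : ℝ => Complex.exp (2*Complex.I*s) / (2*Complex.I))
    (u' := fun s : ℝ => (s:ℂ)^m / (Nat.factorial m : ℂ))
    (v' := fun s : ℝ => Complex.exp (2*Complex.I*s))
    (a := 0) (b := t)
    (fun x _ => by
      have h1 : HasDerivAt (fun z : ℂ => z^(m+1) / (Nat.factorial (m+1) : ℂ))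
          ((x:ℂ)^m / (Nat.factorial m : ℂ)) (x:ℂ) := by
        have := (hasDerivAt_pow (m+1) (x:ℂ)).div_const (Nat.factorial (m+1) : ℂ)
        refine this.congr_deriv ?_
        have hne : ((m:ℂ)+1) ≠ 0 := Nat.cast_add_one_ne_zero m
        have hfe : ((Nat.factorial m : ℂ)) ≠ 0 := Nat.cast_ne_zero.mpr (Nat.factorial_ne_zero m)
        rw [Nat.factorial_succ, show m+1-1 = m from rfl]
        push_cast
        field_simp
        try ring
      exact h1.comp_ofReal)
    (fun x _ => by
      have h1 : HasDerivAt (fun z : ℂ => Complex.exp (2*Complex.I*z) / (2*Complex.I))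
          (Complex.exp (2*Complex.I*x)) (x:ℂ) := by
        have := ((Complex.hasDerivAt_exp (2*Complex.I*(x:ℂ))).comp (x:ℂ)
          ((hasDerivAt_id (x:ℂ)).const_mul (2*Complex.I))).div_const (2*Complex.I)
        refine this.congr_deriv ?_
        field_simp
        try ring
      exact h1.comp_ofReal)
    (by apply Continuous.intervalIntegrable; fun_prop)
    (by apply Continuous.intervalIntegrable; fun_prop)
  have lhs_eq : Fi t (m+1)
      = ∫ s in (0:ℝ)..t, ((s:ℂ)^(m+1) / (Nat.factorial (m+1) : ℂ)) * Complex.exp (2*Complex.I*s) := by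
    unfold Fi
    congr 1
    funext s
    ring
  rw [lhs_eq, key]
  have rhs_eq : (∫ s in (0:ℝ)..t, ((s:ℂ)^m / (Nat.factorial m : ℂ)) * (Complex.exp (2*Complex.I*s) / (2*Complex.I)))
      = (1 / (2*Complex.I)) * Fi t m := by
    unfold Fi
    rw [← intervalIntegral.integral_const_mul]
    congr 1
    funext s
    field_simp
  simp only [Complex.ofReal_zero, zero_pow (Nat.succ_ne_zero m), zero_div, zero_mul, sub_zero]
  rw [rhs_eq]

/-- For `t ≥ 0` and `m : ℕ`, `|∫₀ᵗ e^{2is} s^m/m! ds| ≤ t^m/m!`. -/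
theorem stmt10 (t : ℝ) (ht : 0 ≤ t) (m : ℕ) :
    ‖∫ s in (0:ℝ)..t, Complex.exp (2 * Complex.I * s) * (s:ℂ) ^ m / (Nat.factorial m : ℂ)‖
      ≤ t ^ m / (Nat.factorial m : ℝ) := by
  show ‖Fi t m‖ ≤ t ^ m / (Nat.factorial m : ℝ)
  induction m with
  | zero =>
      simp only [pow_zero, Nat.factorial_zero, Nat.cast_one, div_one]
      have h2I : (2 * Complex.I : ℂ) ≠ 0 := by simp [Complex.I_ne_zero]
      have key : Fi t 0 = (Complex.exp (2*Complex.I*t) - 1) / (2*Complex.I) := by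
        unfold Fi
        simp only [pow_zero, Nat.factorial_zero, Nat.cast_one, mul_one, div_one]
        rw [integral_exp_mul_complex h2I]
        norm_num
      rw [key, norm_div]
      have habs : ‖Complex.exp (2*Complex.I*(t:ℂ))‖ = 1 := by
        rw [Complex.norm_exp]; simp
      have h2 : ‖(2*Complex.I : ℂ)‖ = 2 := by simp
      rw [h2]
      have hb : ‖Complex.exp (2*Complex.I*(t:ℂ)) - 1‖ ≤ 2 := by
        calc ‖Complex.exp (2*Complex.I*(t:ℂ)) - 1‖
            ≤ ‖Complex.exp (2*Complex.I*(t:ℂ))‖ + ‖(1:ℂ)‖ := norm_sub_le _ _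
          _ = 2 := by rw [habs, norm_one]; norm_num
      linarith
  | succ m ih =>
      by_cases hcase : t ≤ (m:ℝ) + 2
      · calc ‖Fi t (m+1)‖ ≤ t ^ (m+2) / (Nat.factorial (m+2) : ℝ) := Fi_trivial t ht (m+1)
          _ ≤ t ^ (m+1) / (Nat.factorial (m+1) : ℝ) := by
              rw [Nat.factorial_succ (m+1)]
              push_cast
              rw [pow_succ, div_le_div_iff₀ (by positivity) (by positivity)]
              have hf : (0:ℝ) < (Nat.factorial (m+1) : ℝ) := by positivity
              nlinarith [mul_le_mul_of_nonneg_right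
                (mul_le_mul_of_nonneg_left hcase (pow_nonneg ht (m+1))) hf.le]
      · push_neg at hcase
        have hm0 : (0:ℝ) ≤ m := Nat.cast_nonneg m
        have hm1t : (m:ℝ) + 1 ≤ t := by linarith
        have ht0 : (0:ℝ) < t := by linarith
        rw [Fi_ibp t m]
        have h2 : ‖(2*Complex.I : ℂ)‖ = 2 := by simp
        have habs : ‖Complex.exp (2*Complex.I*(t:ℂ))‖ = 1 := by
          rw [Complex.norm_exp]; simp
        have h1 : ‖(t:ℂ) ^ (m+1) / (Nat.factorial (m+1) : ℂ) * (Complex.exp (2*Complex.I*t) / (2*Complex.I))‖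
            = t ^ (m+1) / (Nat.factorial (m+1) : ℝ) / 2 := by
          rw [norm_mul, norm_div, norm_div, habs, h2]
          rw [norm_pow, Complex.norm_real, Real.norm_eq_abs, _root_.abs_of_nonneg ht]
          simp [Complex.norm_natCast]
          ring
        have h3 : ‖(1 / (2*Complex.I) : ℂ) * Fi t m‖ ≤ (t ^ m / (Nat.factorial m : ℝ)) / 2 := by
          rw [norm_mul, norm_div, h2, norm_one]
          calc 1/2 * ‖Fi t m‖ ≤ 1/2 * (t ^ m / (Nat.factorial m : ℝ)) := by linarith [ih]
            _ = (t ^ m / (Nat.factorial m : ℝ)) / 2 := by ring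
        calc ‖_ - _‖ ≤ _ + _ := norm_sub_le _ _
          _ ≤ t ^ (m+1) / (Nat.factorial (m+1) : ℝ) / 2 + (t ^ m / (Nat.factorial m : ℝ)) / 2 := by
              rw [h1]; linarith
          _ ≤ t ^ (m+1) / (Nat.factorial (m+1) : ℝ) := by
              have hf : (0:ℝ) < (Nat.factorial m : ℝ) := by positivity
              have key : t ^ m / (Nat.factorial m : ℝ) ≤ t ^ (m+1) / (Nat.factorial (m+1) : ℝ) := by
                rw [Nat.factorial_succ, pow_succ]
                push_cast
                rw [div_le_div_iff₀ (by positivity) (by positivity)]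
                nlinarith [mul_le_mul_of_nonneg_right hm1t
                  (mul_nonneg (pow_nonneg ht m) hf.le)]
              linarith
end

section
/- Let Π be an orthogonal projection, H₀ := I − 2Π, A Hermitian with ‖A‖ ≤ 1, δ ∈ (0,1). For k ≥ 2 and a bit string J ∈ {0,1}^{k-1} with J ≠ (1,...,1), let c be the largest index with J_c = 0, and define Φ_k(J) := ∫₀ᵗ e^{2i(J₁−1)t₁} dt₁ ∫₀^{t₁} e^{2i(J₂−J₁)t₂} dt₂ ⋯ ∫₀^{t_{k-1}} e^{2i(1−J_{k-1})t_k} dt_k. Then |Φ_k(J)| ≤ t^{k-1}/(k−1)! for all t ≥ 0. -/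
open NormedSpace

lemma norm_exp_I_mul (w : ℝ) (u : ℝ) :
    ‖Complex.exp (2 * Complex.I * (w : ℂ) * (u : ℝ))‖ = 1 := by
  have : (2 : ℂ) * Complex.I * (w : ℂ) * (u : ℝ) = ((2 * w * u : ℝ) : ℂ) * Complex.I := by
    push_cast; ring
  rw [this, Complex.norm_exp_ofReal_mul_I]

lemma integral_pow_div (n : ℕ) (t : ℝ) :
    (∫ u in (0:ℝ)..t, ((u:ℂ) ^ n / (Nat.factorial n : ℂ))) =
      (t:ℂ) ^ (n+1) / (Nat.factorial (n+1) : ℂ) := by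
  rw [intervalIntegral.integral_div]
  have : (∫ u in (0:ℝ)..t, ((u:ℂ) ^ n)) = (((∫ u in (0:ℝ)..t, u ^ n : ℝ)) : ℂ) := by
    rw [← intervalIntegral.integral_ofReal]
    norm_num
  rw [this, integral_pow, Nat.factorial_succ]
  have h1 : ((n:ℂ)+1) ≠ 0 := Nat.cast_add_one_ne_zero n
  have h2 : ((Nat.factorial n : ℂ)) ≠ 0 := Nat.cast_ne_zero.mpr (Nat.factorial_ne_zero n)
  push_cast
  field_simp
  simp

lemma integral_pow_div_real (n : ℕ) (t : ℝ) :
    (∫ u in (0:ℝ)..t, (u ^ n / (Nat.factorial n : ℝ))) =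
      t ^ (n+1) / (Nat.factorial (n+1) : ℝ) := by
  rw [intervalIntegral.integral_div, integral_pow, Nat.factorial_succ]
  have h1 : ((n:ℝ)+1) ≠ 0 := by positivity
  have h2 : ((Nat.factorial n : ℝ)) ≠ 0 := Nat.cast_ne_zero.mpr (Nat.factorial_ne_zero n)
  push_cast
  field_simp
  simp
lemma key_ibp (m : ℕ) (t : ℝ) (ht : 0 ≤ t) :
    ‖∫ u in (0:ℝ)..t, Complex.exp (2 * Complex.I * u) * ((u:ℂ) ^ m / (Nat.factorial m : ℂ))‖
      ≤ t ^ m / (Nat.factorial m : ℝ) := by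
  have hI : (2 * Complex.I) ≠ 0 := by simp [Complex.I_ne_zero]
  have hexp_norm : ∀ u : ℝ, ‖Complex.exp (2 * Complex.I * (u:ℝ))‖ = 1 := by
    intro u
    have : (2:ℂ) * Complex.I * (u:ℝ) = ((2*u : ℝ):ℂ) * Complex.I := by push_cast; ring
    rw [this, Complex.norm_exp_ofReal_mul_I]
  rcases Nat.eq_zero_or_pos m with hm | hm
  · subst hm
    simp only [pow_zero, Nat.factorial_zero, Nat.cast_one, div_one, mul_one]
    rw [integral_exp_mul_complex hI]
    calc ‖(Complex.exp (2*Complex.I*t) - Complex.exp (2*Complex.I*(0:ℝ)))/(2*Complex.I)‖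
        ≤ (‖Complex.exp (2*Complex.I*(t:ℝ))‖ + ‖Complex.exp (2*Complex.I*((0:ℝ):ℂ))‖)/‖(2*Complex.I)‖ := by
          rw [norm_div]
          gcongr
          · push_cast
            exact norm_sub_le _ _
      _ ≤ 1 := by
          rw [hexp_norm t]
          have h0 := hexp_norm 0
          push_cast at h0 ⊢
          rw [h0]
          simp
  · -- integration by parts
    set M := m - 1 with hM
    have hmM : m = M + 1 := by omega
    have hu : ∀ x ∈ Set.uIcc (0:ℝ) t, HasDerivAt (fun x : ℝ => (x:ℂ)^m / (Nat.factorial m : ℂ))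
        ((x:ℂ)^M / (Nat.factorial M : ℂ)) x := by
      intro x _
      have h1 : HasDerivAt (fun z : ℂ => z ^ m) ((m:ℂ) * (x:ℂ)^(m-1)) (x:ℂ) := hasDerivAt_pow m _
      have h2 := (h1.comp_ofReal).div_const (Nat.factorial m : ℂ)
      refine h2.congr_deriv ?_
      rw [hmM]
      rw [Nat.factorial_succ]
      have h3 : ((Nat.factorial M : ℂ)) ≠ 0 := Nat.cast_ne_zero.mpr (Nat.factorial_ne_zero M)
      have h4 : ((M:ℂ)+1) ≠ 0 := Nat.cast_add_one_ne_zero M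
      push_cast
      field_simp
    have hv : ∀ x ∈ Set.uIcc (0:ℝ) t, HasDerivAt (fun x : ℝ => Complex.exp (2*Complex.I*x) / (2*Complex.I))
        (Complex.exp (2*Complex.I*x)) x := by
      intro x _
      have h1 : HasDerivAt (fun z : ℂ => Complex.exp (2*Complex.I*z))
          (Complex.exp (2*Complex.I*(x:ℂ)) * (2*Complex.I)) (x:ℂ) := by
        simpa using ((hasDerivAt_id (x:ℂ)).const_mul (2*Complex.I)).cexp
      have h2 := (h1.comp_ofReal).div_const (2*Complex.I)
      simpa [mul_div_cancel_right₀ _ hI] using h2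
    have hu' : IntervalIntegrable (fun x : ℝ => (x:ℂ)^M / (Nat.factorial M : ℂ)) MeasureTheory.volume 0 t :=
      ((( Complex.continuous_ofReal.pow M).div_const _)).intervalIntegrable 0 t
    have hv' : IntervalIntegrable (fun x : ℝ => Complex.exp (2*Complex.I*x)) MeasureTheory.volume 0 t :=
      ((Complex.continuous_exp.comp (continuous_const.mul Complex.continuous_ofReal))).intervalIntegrable 0 t
    have ibp := intervalIntegral.integral_mul_deriv_eq_deriv_mul hu hv hu' hv'
    have hcomm : (∫ u in (0:ℝ)..t, Complex.exp (2 * Complex.I * u) * ((u:ℂ) ^ m / (Nat.factorial m : ℂ)))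
        = ∫ u in (0:ℝ)..t, ((u:ℂ) ^ m / (Nat.factorial m : ℂ)) * Complex.exp (2 * Complex.I * u) := by
      congr 1; funext u; ring
    rw [hcomm, ibp]
    have h00 : ((0:ℝ):ℂ)^m / (Nat.factorial m : ℂ) * (Complex.exp (2*Complex.I*((0:ℝ):ℂ)) / (2*Complex.I)) = 0 := by
      rw [hmM]; simp
    rw [h00, sub_zero]
    have hnorm2I : ‖(2*Complex.I : ℂ)‖ = 2 := by simp
    have hterm1 : ‖((t:ℝ):ℂ)^m / (Nat.factorial m : ℂ) * (Complex.exp (2*Complex.I*(t:ℝ)) / (2*Complex.I))‖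
        = t^m / (Nat.factorial m : ℝ) / 2 := by
      rw [norm_mul, norm_div, norm_div, hexp_norm t, hnorm2I]
      simp [abs_of_nonneg ht, _root_.abs_of_nonneg (pow_nonneg ht m)]
      ring
    have hterm2 : ‖∫ u in (0:ℝ)..t, ((u:ℂ)^M / (Nat.factorial M : ℂ)) * (Complex.exp (2*Complex.I*u) / (2*Complex.I))‖
        ≤ t^m / (Nat.factorial m : ℝ) / 2 := by
      have hbound : ∀ᵐ (u : ℝ) ∂(MeasureTheory.volume.restrict (Set.uIoc (0:ℝ) t)),
          ‖((u:ℂ)^M / (Nat.factorial M : ℂ)) * (Complex.exp (2*Complex.I*u) / (2*Complex.I))‖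
            ≤ u^M / (Nat.factorial M : ℝ) / 2 := by
        rw [MeasureTheory.ae_restrict_iff' measurableSet_uIoc]
        filter_upwards with u hu
        rw [Set.uIoc_of_le ht] at hu
        have hu0 : 0 ≤ u := le_of_lt hu.1
        rw [norm_mul, norm_div, norm_div, hexp_norm u, hnorm2I]
        simp [abs_of_nonneg hu0, _root_.abs_of_nonneg (pow_nonneg hu0 M)]
        apply le_of_eq; ring
      have hgint : IntervalIntegrable (fun u : ℝ => u^M / (Nat.factorial M : ℝ) / 2) MeasureTheory.volume 0 t :=
        ((((continuous_pow M).div_const _).div_const _)).intervalIntegrable 0 t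
      refine (intervalIntegral.norm_integral_le_of_norm_le ht (by simpa only [Set.uIoc_of_le ht] using (MeasureTheory.ae_restrict_iff' measurableSet_uIoc).mp hbound) hgint).trans ?_
      have : (∫ u in (0:ℝ)..t, u^M / (Nat.factorial M : ℝ) / 2)
          = t^m / (Nat.factorial m : ℝ) / 2 := by
        rw [intervalIntegral.integral_div, intervalIntegral.integral_div, integral_pow, hmM,
          Nat.factorial_succ]
        have h3 : ((Nat.factorial M : ℝ)) ≠ 0 := Nat.cast_ne_zero.mpr (Nat.factorial_ne_zero M)
        have h4 : ((M:ℝ)+1) ≠ 0 := by positivity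
        push_cast
        field_simp
        try ring
      rw [this]
    calc ‖_ - _‖ ≤ _ := norm_sub_le _ _
      _ ≤ t^m / (Nat.factorial m : ℝ) / 2 + t^m / (Nat.factorial m : ℝ) / 2 := by
          rw [hterm1]; gcongr
      _ = t^m / (Nat.factorial m : ℝ) := by ring

/-- Bound on the iterated Dyson phase integral `Φ_k(J)` for a path `J ≠ (1,…,1)`.
The nested integral is encoded by functions `Ψ j`, with `Ψ k = 1`,
`Ψ j (t) = ∫₀ᵗ e^{2i(J_{j+1}-J_j)u} Ψ_{j+1}(u) du`, and `Φ_k(J)(t) = Ψ 0 t`,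
where `J 0 = J k = 1`. Then `|Φ_k(J)| ≤ t^{k-1}/(k-1)!`. -/
theorem stmt17 (k : ℕ) (hk : 2 ≤ k) (J : ℕ → ℕ)
    (hJ : ∀ j, J j ≤ 1) (hJ0 : J 0 = 1) (hJk : J k = 1)
    (hne : ∃ c, 1 ≤ c ∧ c < k ∧ J c = 0)
    (Ψ : ℕ → ℝ → ℂ)
    (hΨk : ∀ t : ℝ, Ψ k t = 1)
    (hΨ : ∀ j < k, ∀ t : ℝ, Ψ j t =
      ∫ u in (0:ℝ)..t, Complex.exp (2 * Complex.I * ((J (j+1) : ℂ) - (J j : ℂ)) * u) * Ψ (j+1) u) :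
    ∀ t : ℝ, 0 ≤ t → ‖Ψ 0 t‖ ≤ t ^ (k - 1) / (Nat.factorial (k - 1) : ℝ) := by
  intro t ht
  classical
  obtain ⟨c₀, hc₀1, hc₀k, hc₀J⟩ := hne
  set c := Nat.findGreatest (fun i => J i = 0) (k-1) with hcdef
  have hcJ : J c = 0 := Nat.findGreatest_spec (P := fun i => J i = 0) (m := c₀) (by omega) hc₀J
  have hck : c ≤ k - 1 := Nat.findGreatest_le _
  have hc1 : 1 ≤ c := by
    by_contra h
    have hc0 : c = 0 := by omega
    rw [hc0] at hcJ
    omega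
  have hone : ∀ j, c < j → j ≤ k → J j = 1 := by
    intro j hcj hjk
    rcases Nat.lt_or_ge j k with h | h
    · have h1 : ¬ (J j = 0) := Nat.findGreatest_is_greatest (P := fun i => J i = 0) (n := k-1) hcj (by omega)
      have := hJ j; omega
    · have : j = k := by omega
      rw [this]; exact hJk
  -- Step 1: exact value of Ψ for indices above c
  have hpow : ∀ n, n ≤ k - (c+1) → ∀ s : ℝ,
      Ψ (k - n) s = (s:ℂ)^n / (Nat.factorial n : ℂ) := by
    intro n
    induction n with
    | zero => intro _ s; simpa using hΨk s
    | succ n ih =>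
      intro hn s
      have hj : k - (n+1) < k := by omega
      have hsucc : k - (n+1) + 1 = k - n := by omega
      have hph : ((J (k-n) : ℂ) - (J (k-(n+1)) : ℂ)) = 0 := by
        rw [hone (k-n) (by omega) (by omega), hone (k-(n+1)) (by omega) (by omega)]
        ring
      rw [hΨ _ hj]
      have heq : (∫ u in (0:ℝ)..s,
          Complex.exp (2*Complex.I*((J (k-(n+1)+1):ℂ) - (J (k-(n+1)):ℂ))*u) * Ψ (k-(n+1)+1) u)
          = ∫ u in (0:ℝ)..s, ((u:ℂ)^n / (Nat.factorial n : ℂ)) := by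
        apply intervalIntegral.integral_congr
        intro u _
        simp only [hph, mul_zero, zero_mul, Complex.exp_zero, one_mul, hsucc,
          ih (by omega)]
      rw [heq, integral_pow_div]
  -- Step 2: bound at level c via integration by parts
  have hcb : ∀ s : ℝ, 0 ≤ s →
      ‖Ψ c s‖ ≤ s ^ (k-1-c) / (Nat.factorial (k-1-c) : ℝ) := by
    intro s hs
    have hck' : c < k := by omega
    have hph : ((J (c+1) : ℂ) - (J c : ℂ)) = 1 := by
      rw [hone (c+1) (by omega) (by omega), hcJ]
      norm_num
    have hidx : k - (k-(c+1)) = c + 1 := by omega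
    have hidx2 : k - (c+1) = k - 1 - c := by omega
    have hΨc1 : ∀ u : ℝ, Ψ (c+1) u = (u:ℂ)^(k-1-c) / (Nat.factorial (k-1-c) : ℂ) := by
      intro u
      have h := hpow (k-(c+1)) le_rfl u
      rw [hidx, hidx2] at h
      exact h
    rw [hΨ c hck']
    have heq : (∫ u in (0:ℝ)..s,
        Complex.exp (2*Complex.I*((J (c+1):ℂ) - (J c:ℂ))*u) * Ψ (c+1) u)
        = ∫ u in (0:ℝ)..s,
            Complex.exp (2*Complex.I*u) * ((u:ℂ)^(k-1-c) / (Nat.factorial (k-1-c) : ℂ)) := by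
      apply intervalIntegral.integral_congr
      intro u _
      simp only [hph, mul_one, hΨc1]
    rw [heq]
    exact key_ibp (k-1-c) s hs
  -- Step 3: descend from c to 0
  have hdown : ∀ n, n ≤ c → ∀ s : ℝ, 0 ≤ s →
      ‖Ψ (c - n) s‖ ≤ s ^ (k-1-(c-n)) / (Nat.factorial (k-1-(c-n)) : ℝ) := by
    intro n
    induction n with
    | zero => intro _ s hs; simpa using hcb s hs
    | succ n ih =>
      intro hn s hs
      have hj : c - (n+1) < k := by omega
      have hsucc : c - (n+1) + 1 = c - n := by omega
      set p := k - 1 - (c - n) with hp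
      have hp1 : k - 1 - (c - (n+1)) = p + 1 := by omega
      rw [hΨ _ hj, hp1]
      have hbound : ∀ᵐ (u : ℝ) ∂(MeasureTheory.volume.restrict (Set.uIoc (0:ℝ) s)),
          ‖Complex.exp (2*Complex.I*((J (c-(n+1)+1):ℂ) - (J (c-(n+1)):ℂ))*u) * Ψ (c-(n+1)+1) u‖
            ≤ u ^ p / (Nat.factorial p : ℝ) := by
        rw [MeasureTheory.ae_restrict_iff' measurableSet_uIoc]
        filter_upwards with u hu
        rw [Set.uIoc_of_le hs] at hu
        have hu0 : 0 ≤ u := le_of_lt hu.1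
        rw [norm_mul]
        have hcast : ((J (c-(n+1)+1):ℂ) - (J (c-(n+1)):ℂ))
            = Complex.ofReal ((J (c-(n+1)+1):ℝ) - (J (c-(n+1)):ℝ)) := by push_cast; ring
        rw [hcast, norm_exp_I_mul, one_mul, hsucc]
        exact ih (by omega) u hu0
      have hgint : IntervalIntegrable (fun u : ℝ => u ^ p / (Nat.factorial p : ℝ))
          MeasureTheory.volume 0 s :=
        ((continuous_pow p).div_const _).intervalIntegrable 0 s
      refine (intervalIntegral.norm_integral_le_of_norm_le hs (by simpa only [Set.uIoc_of_le hs] using (MeasureTheory.ae_restrict_iff' measurableSet_uIoc).mp hbound) hgint).trans ?_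
      rw [integral_pow_div_real]
  have hfin := hdown c le_rfl t ht
  simpa using hfin
end
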